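/- Let N ∈ ℕ, let (c,d) represent a cusp of X_H(N) with gcd(c,d,N) = 1, let g₂ = gcd(N, c²), N₂ = N/g₂, and let a be such that ad - bc = 1 for some b (i.e. [a b; c d] ∈ SL₂(ℤ)). Then the width of the cusp, defined as the smallest positive integer w with M_s [1 w; 0 1] M_s⁻¹ ∈ Γ_H(N) for M_s = [a b; c d], equals N₂ · min{ t ∈ ℕ : 1 + a·c·N₂·t ∈ H }. -/

import Mathlib

private theorem dvd_aux (N : ℕ) (hN : 0 < N) (c : ℤ) (N₂ : ℕ)
    (hN₂ : N₂ = N / Int.gcd (N : ℤ) (c ^ 2)) (w : ℕ) :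
    (N : ℤ) ∣ c ^ 2 * w ↔ N₂ ∣ w := by
  have hgpos : 0 < Int.gcd (N : ℤ) (c ^ 2) :=
    Int.gcd_pos_of_ne_zero_left _ (by exact_mod_cast hN.ne')
  set g : ℕ := Int.gcd (N : ℤ) (c ^ 2) with hg
  have hgz : (g : ℤ) ≠ 0 := by exact_mod_cast hgpos.ne'
  have hgN : (g : ℤ) ∣ (N : ℤ) := Int.gcd_dvd_left _ _
  have hgc : (g : ℤ) ∣ c ^ 2 := Int.gcd_dvd_right _ _
  obtain ⟨n', hn'⟩ := hgN
  obtain ⟨c', hc'⟩ := hgc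
  have hgNnat : g ∣ N := by
    have : (g:ℤ) ∣ (N:ℤ) := ⟨n', hn'⟩
    exact_mod_cast this
  have hN₂' : (N₂ : ℤ) = n' := by
    apply mul_left_cancel₀ hgz
    rw [← hn', hN₂]
    exact_mod_cast (Nat.mul_div_cancel' hgNnat)
  have hco : IsCoprime (n' : ℤ) c' := by
    rw [Int.isCoprime_iff_gcd_eq_one]
    have e1 : (N : ℤ) / (g : ℤ) = n' := by rw [hn']; exact Int.mul_ediv_cancel_left _ hgz
    have e2 : c ^ 2 / (g : ℤ) = c' := by rw [hc']; exact Int.mul_ediv_cancel_left _ hgz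
    have h3 := Int.gcd_div_gcd_div_gcd (i := (N:ℤ)) (j := c ^ 2) hgpos
    rw [← hg, e1, e2] at h3
    exact h3
  constructor
  · intro h
    rw [hn', hc'] at h
    have h2 : (n' : ℤ) ∣ c' * w := by
      rcases h with ⟨k, hk⟩
      exact ⟨k, by apply mul_left_cancel₀ hgz; linarith [hk]⟩
    have := hco.dvd_of_dvd_mul_left h2
    rw [← hN₂'] at this
    exact_mod_cast this
  · intro h
    rcases h with ⟨k, hk⟩
    rw [hn', hc']
    refine ⟨c' * k, ?_⟩
    rw [hk, ← hN₂']
    push_cast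
    ring

theorem stmt3 (N : ℕ) (hN : 0 < N) (H : Subgroup (ZMod N)ˣ) (hH : -1 ∈ H)
    (a b c d : ℤ) (hdet : a * d - b * c = 1)
    (N₂ : ℕ) (hN₂ : N₂ = N / Int.gcd (N : ℤ) (c ^ 2)) :
    sInf {w : ℕ | 0 < w ∧ (N : ℤ) ∣ c ^ 2 * w ∧
        (∃ u ∈ H, ((u : (ZMod N)ˣ) : ZMod N) = ((1 - a * c * w : ℤ) : ZMod N)) ∧
        (∃ u ∈ H, ((u : (ZMod N)ˣ) : ZMod N) = ((1 + a * c * w : ℤ) : ZMod N))}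
      = N₂ * sInf {t : ℕ | 0 < t ∧
        ∃ u ∈ H, ((u : (ZMod N)ˣ) : ZMod N) = ((1 + a * c * N₂ * t : ℤ) : ZMod N)} := by
  have hdvd := dvd_aux N hN c N₂ hN₂
  have hN₂pos : 0 < N₂ := by
    refine Nat.pos_of_dvd_of_pos ((hdvd N).mp ⟨c ^ 2, by ring⟩) hN
  set S : Set ℕ := {w : ℕ | 0 < w ∧ (N : ℤ) ∣ c ^ 2 * w ∧
        (∃ u ∈ H, ((u : (ZMod N)ˣ) : ZMod N) = ((1 - a * c * w : ℤ) : ZMod N)) ∧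
        (∃ u ∈ H, ((u : (ZMod N)ˣ) : ZMod N) = ((1 + a * c * w : ℤ) : ZMod N))} with hS
  set T : Set ℕ := {t : ℕ | 0 < t ∧
        ∃ u ∈ H, ((u : (ZMod N)ˣ) : ZMod N) = ((1 + a * c * N₂ * t : ℤ) : ZMod N)} with hT
  -- the product of the diagonal entries is 1 mod N
  have key : ∀ w : ℕ, (N : ℤ) ∣ c ^ 2 * w →
      ((1 + a * c * w : ℤ) : ZMod N) * ((1 - a * c * w : ℤ) : ZMod N) = 1 := by
    intro w hw
    have h1 : (N : ℤ) ∣ (1 + a * c * w) * (1 - a * c * w) - 1 := by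
      have he : (1 + a * c * w) * (1 - a * c * w) - 1 = -(a ^ 2 * w) * (c ^ 2 * w) := by ring
      rw [he]
      exact hw.mul_left _
    have h2 : ((1 : ℤ) : ZMod N) = (((1 + a * c * w) * (1 - a * c * w) : ℤ) : ZMod N) :=
      (ZMod.intCast_eq_intCast_iff' _ _ _).mpr (Int.modEq_iff_dvd.mpr h1)
    push_cast at h2
    push_cast
    linear_combination -h2
  -- membership correspondence
  have hmem : ∀ w : ℕ, w ∈ S ↔ ∃ t ∈ T, w = N₂ * t := by
    intro w
    constructor
    · rintro ⟨hw0, hwdvd, -, u, hu, huval⟩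
      obtain ⟨t, rfl⟩ := (hdvd w).mp hwdvd
      have ht0 : 0 < t := Nat.pos_of_ne_zero (by rintro rfl; simp at hw0)
      refine ⟨t, ⟨ht0, u, hu, ?_⟩, rfl⟩
      rw [huval]
      push_cast
      ring_nf
    · rintro ⟨t, ⟨ht0, u, hu, huval⟩, rfl⟩
      have hwdvd : (N : ℤ) ∣ c ^ 2 * (N₂ * t : ℕ) := (hdvd _).mpr ⟨t, rfl⟩
      have huval' : ((u : (ZMod N)ˣ) : ZMod N) = ((1 + a * c * (N₂ * t : ℕ) : ℤ) : ZMod N) := by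
        rw [huval]; push_cast; ring_nf
      refine ⟨Nat.mul_pos hN₂pos ht0, hwdvd, ?_, u, hu, huval'⟩
      refine ⟨u⁻¹, H.inv_mem hu, ?_⟩
      have hmul : ((u : (ZMod N)ˣ) : ZMod N) * ((1 - a * c * (N₂ * t : ℕ) : ℤ) : ZMod N) = 1 := by
        rw [huval']
        exact key _ hwdvd
      exact Units.inv_eq_of_mul_eq_one_right hmul
  rcases Set.eq_empty_or_nonempty T with hTe | hTne
  · have hSe : S = ∅ := by
      rw [Set.eq_empty_iff_forall_notMem]
      intro w hw
      obtain ⟨t, ht, -⟩ := (hmem w).mp hw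
      rw [hTe] at ht
      exact ht
    rw [hSe, hTe, Nat.sInf_empty, mul_zero]
  · have ht₀ : sInf T ∈ T := Nat.sInf_mem hTne
    have hmemS : N₂ * sInf T ∈ S := (hmem _).mpr ⟨sInf T, ht₀, rfl⟩
    refine le_antisymm (Nat.sInf_le hmemS) ?_
    have hSne : S.Nonempty := ⟨_, hmemS⟩
    obtain ⟨t₁, ht₁, heq⟩ := (hmem _).mp (Nat.sInf_mem hSne)
    rw [heq]
    exact Nat.mul_le_mul_left _ (Nat.sInf_le ht₁)
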